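/- Let A be an m-th order n-dimensional weakly irreducible nonnegative tensor that is spectral ℓ-symmetric, and suppose D ∈ 𝔇^{(j)} satisfies D ≠ I and D^σ = I. Then there exists a map φ : [n] → {1,...,σ} taking at least two distinct values, with φ(1) ≡ 0 mod σ, such that whenever a_{i1...im} ≠ 0 one has j/ℓ + m·φ(i1)/σ ≡ (φ(i1)+···+φ(im))/σ (mod ℤ). -/

import Mathlib

open BigOperators

/-- An order-`m`, dimension-`n` real tensor (hypermatrix). -/
abbrev Tensor (m n : ℕ) : Type := (Fin m → Fin n) → ℝ

/-- The primitive rotation `e^{i·2π/k}` of the complex plane. -/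
noncomputable def rot (k : ℕ) : ℂ := Complex.exp (2 * (Real.pi : ℂ) * Complex.I / (k : ℂ))

/-- A tensor is nonnegative if all its entries are nonnegative. -/
def Tensor.Nonneg {m n : ℕ} (A : Tensor m n) : Prop := ∀ α, 0 ≤ A α

/-- A tensor is symmetric if its entries are invariant under permutations of indices. -/
def Tensor.Symm {m n : ℕ} (A : Tensor m n) : Prop :=
  ∀ (σ : Equiv.Perm (Fin m)) (α : Fin m → Fin n), A (α ∘ σ) = A α

/-- Arc `(i,j)` of the digraph associated to `A`: some entry `a_{i i₂ … i_m} ≠ 0`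
with `j` among the later indices. -/
def Tensor.Arc {m n : ℕ} [NeZero m] (A : Tensor m n) (i j : Fin n) : Prop :=
  ∃ α : Fin m → Fin n, A α ≠ 0 ∧ α 0 = i ∧ ∃ k : Fin m, k ≠ 0 ∧ α k = j

/-- `A` is weakly irreducible if its associated digraph is strongly connected. -/
def Tensor.WeaklyIrreducible {m n : ℕ} [NeZero m] (A : Tensor m n) : Prop :=
  ∀ i j : Fin n, Relation.ReflTransGen A.Arc i j

/-- The eigenvalue equations `(A x^{m-1})_i = λ x_i^{m-1}` for all `i`. -/
def Tensor.EigEq {m n : ℕ} [NeZero m] (A : Tensor m n) (lam : ℂ) (x : Fin n → ℂ) : Prop :=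
  ∀ i : Fin n,
    (∑ α : Fin m → Fin n,
      if α 0 = i then (A α : ℂ) * ∏ k ∈ Finset.univ.erase (0 : Fin m), x (α k) else 0)
    = lam * x i ^ (m - 1)

/-- `lam` is an eigenvalue of the tensor `A`. -/
def Tensor.IsEig {m n : ℕ} [NeZero m] (A : Tensor m n) (lam : ℂ) : Prop :=
  ∃ x : Fin n → ℂ, x ≠ 0 ∧ A.EigEq lam x

/-- `A` is spectral `ℓ`-symmetric: its spectrum is invariant under rotation by `e^{i2π/ℓ}`. -/
def Tensor.SpectralSym {m n : ℕ} [NeZero m] (ℓ : ℕ) (A : Tensor m n) : Prop :=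
  ∀ lam : ℂ, A.IsEig lam ↔ A.IsEig (rot ℓ * lam)

/-- `A = e^{-iθ} D^{-(m-1)} A D` for the diagonal matrix `D = diag d`, entrywise. -/
def Tensor.DiagSim {m n : ℕ} [NeZero m] (A : Tensor m n) (θ : ℝ) (d : Fin n → ℂ) : Prop :=
  ∀ α : Fin m → Fin n,
    (A α : ℂ) = Complex.exp (-(θ : ℂ) * Complex.I) * d (α 0) ^ (-((m : ℤ) - 1)) * (A α : ℂ) *
      ∏ k ∈ Finset.univ.erase (0 : Fin m), d (α k)

/-- The set `𝔇^{(j)}` of normalized unimodular diagonal matrices `D` with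
`A = e^{-i2πj/ℓ} D^{-(m-1)} A D`. -/
def Tensor.DSet {m n : ℕ} [NeZero m] [NeZero n] (A : Tensor m n) (ℓ j : ℕ) :
    Set (Fin n → ℂ) :=
  {d | d 0 = 1 ∧ (∀ i, ‖d i‖ = 1) ∧ A.DiagSim (2 * Real.pi * j / ℓ) d}

/-- The set `𝔇 = ⋃_{j=0}^{ℓ-1} 𝔇^{(j)}`. -/
def Tensor.DFull {m n : ℕ} [NeZero m] [NeZero n] (A : Tensor m n) (ℓ : ℕ) :
    Set (Fin n → ℂ) :=
  ⋃ j ∈ Finset.range ℓ, A.DSet ℓ j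

/-- An `m`-uniform hypergraph on vertex set `Fin n`. -/
structure TensorHypergraph (m n : ℕ) where
  edges : Finset (Finset (Fin n))
  uniform : ∀ e ∈ edges, e.card = m

/-- The adjacency tensor of an `m`-uniform hypergraph. -/
noncomputable def TensorHypergraph.adjTensor {m n : ℕ} (G : TensorHypergraph m n) : Tensor m n :=
  fun α => if Finset.image α Finset.univ ∈ G.edges then (1 : ℝ) / (m - 1).factorial else 0

/-- A hypergraph is connected if every two vertices are joined by a walk. -/
def TensorHypergraph.Connected {m n : ℕ} (G : TensorHypergraph m n) : Prop :=
  ∀ i j : Fin n, Relation.ReflTransGen (fun u v => ∃ e ∈ G.edges, u ∈ e ∧ v ∈ e) i j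

lemma aux_root {σ : ℕ} (hσ : 0 < σ) (z : ℂ) (hz : z ^ σ = 1) :
    ∃ k : ℕ, 1 ≤ k ∧ k ≤ σ ∧ z = Complex.exp (2 * Real.pi * Complex.I * k / σ) ∧
      (z = 1 ↔ k = σ) := by
  haveI : NeZero σ := ⟨hσ.ne'⟩
  obtain ⟨i, hi, hzi⟩ :=
    (Complex.isPrimitiveRoot_exp σ hσ.ne').eq_pow_of_pow_eq_one hz
  have hσC : (σ : ℂ) ≠ 0 := Nat.cast_ne_zero.mpr hσ.ne'
  have hpow : ∀ k : ℕ,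
      Complex.exp (2 * Real.pi * Complex.I / σ) ^ k
        = Complex.exp (2 * Real.pi * Complex.I * k / σ) := by
    intro k
    rw [← Complex.exp_nat_mul]
    congr 1
    ring
  rcases Nat.eq_zero_or_pos i with hi0 | hip
  · have hz1 : z = 1 := by rw [← hzi, hi0, pow_zero]
    refine ⟨σ, hσ, le_refl σ, ?_, by simp [hz1]⟩
    rw [hz1, mul_div_assoc, div_self hσC, mul_one, Complex.exp_two_pi_mul_I]
  · refine ⟨i, hip, hi.le, by rw [← hzi, hpow], ?_⟩
    constructor
    · intro h1
      exfalso
      rw [← hzi, hpow] at h1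
      obtain ⟨t, ht⟩ := Complex.exp_eq_one_iff.mp h1
      have hc : (2 * (Real.pi : ℂ) * Complex.I) * ((i : ℂ) / σ)
          = (2 * (Real.pi : ℂ) * Complex.I) * t := by linear_combination ht
      have hdiv : (i : ℂ) / σ = t := mul_left_cancel₀ Complex.two_pi_I_ne_zero hc
      rw [div_eq_iff hσC] at hdiv
      have hiz : (i : ℤ) = t * σ := by exact_mod_cast hdiv
      have h1i : (1 : ℤ) ≤ (i : ℤ) := by exact_mod_cast hip
      have h2i : (i : ℤ) < σ := by exact_mod_cast hi
      have hσz : (0 : ℤ) < σ := by exact_mod_cast hσ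
      rcases le_or_gt t 0 with htle | htgt
      · nlinarith
      · have : (1 : ℤ) ≤ t := htgt
        nlinarith
    · intro h
      omega

/-- if `D ∈ 𝔇^{(j)}`, `D ≠ I` and `D^σ = I`, then there is a map
`φ : [n] → {1,…,σ}` taking at least two values, with `φ(1) ≡ 0 (mod σ)` (i.e. `φ(1) = σ`),
such that `a_{i₁…i_m} ≠ 0` implies `j/ℓ + m·φ(i₁)/σ ≡ (φ(i₁)+⋯+φ(i_m))/σ (mod ℤ)`. -/
theorem stmt6 {m n ℓ σ j : ℕ} [NeZero m] [NeZero n] (hℓ : 0 < ℓ) (hσ : 0 < σ)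
    (A : Tensor m n) (hA : A.Nonneg) (hirr : A.WeaklyIrreducible) (hsym : A.SpectralSym ℓ)
    (d : Fin n → ℂ) (hd : d ∈ A.DSet ℓ j) (hdne : d ≠ fun _ => 1)
    (hdσ : ∀ i, d i ^ σ = 1) :
    ∃ φ : Fin n → ℕ, (∀ v, 1 ≤ φ v ∧ φ v ≤ σ) ∧ φ 0 = σ ∧ (∃ v w, φ v ≠ φ w) ∧
      ∀ α : Fin m → Fin n, A α ≠ 0 →
        ∃ z : ℤ, (j : ℚ) / (ℓ : ℚ) + ((m : ℚ) * (φ (α 0) : ℚ)) / (σ : ℚ)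
          = (∑ k : Fin m, (φ (α k) : ℚ)) / (σ : ℚ) + (z : ℚ) := by
  obtain ⟨hd0, habs, hsim⟩ := hd
  choose φ h1 h2 h3 h4 using fun v => aux_root hσ (d v) (hdσ v)
  have hσC : (σ : ℂ) ≠ 0 := Nat.cast_ne_zero.mpr hσ.ne'
  refine ⟨φ, fun v => ⟨h1 v, h2 v⟩, (h4 0).mp hd0, ?_, ?_⟩
  · have hv : ∃ v, d v ≠ 1 := by
      by_contra h
      push_neg at h
      exact hdne (funext h)
    obtain ⟨v, hv⟩ := hv
    exact ⟨v, 0, fun he => hv ((h4 v).mpr (he.trans ((h4 0).mp hd0)))⟩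
  · intro α hα
    have hAα : (A α : ℂ) ≠ 0 := by exact_mod_cast hα
    have heq := hsim α
    simp only [h3] at heq
    rw [← Complex.exp_int_mul, ← Complex.exp_sum] at heq
    have hmul : (A α : ℂ) * 1 = (A α : ℂ) *
        (Complex.exp (-((2 * Real.pi * j / ℓ : ℝ) : ℂ) * Complex.I) *
          Complex.exp ((-((m : ℤ) - 1) : ℤ) * (2 * Real.pi * Complex.I * (φ (α 0)) / σ)) *
          Complex.exp (∑ k ∈ Finset.univ.erase (0 : Fin m),
            2 * Real.pi * Complex.I * (φ (α k)) / σ)) := by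
      rw [mul_one]
      linear_combination heq
    have hX := (mul_left_cancel₀ hAα hmul).symm
    rw [← Complex.exp_add, ← Complex.exp_add] at hX
    obtain ⟨t, ht⟩ := Complex.exp_eq_one_iff.mp hX
    push_cast at ht
    set S : ℂ := ∑ k ∈ Finset.univ.erase (0 : Fin m), (φ (α k) : ℂ) with hS
    have hsum2 : (∑ k ∈ Finset.univ.erase (0 : Fin m),
        2 * (Real.pi : ℂ) * Complex.I * (φ (α k)) / σ)
        = 2 * (Real.pi : ℂ) * Complex.I * S / σ := by
      rw [hS, Finset.mul_sum, Finset.sum_div]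
    rw [hsum2] at ht
    have hℓC : (ℓ : ℂ) ≠ 0 := Nat.cast_ne_zero.mpr hℓ.ne'
    have hq : -((j : ℂ) / ℓ) + (1 - (m : ℂ)) * (φ (α 0)) / σ + S / σ = t := by
      have hsc : (-((j : ℂ) / ℓ) + (1 - (m : ℂ)) * (φ (α 0)) / σ + S / σ)
          * (2 * (Real.pi : ℂ) * Complex.I)
          = t * (2 * (Real.pi : ℂ) * Complex.I) := by
        field_simp
        field_simp at ht
        linear_combination ht
      exact mul_right_cancel₀ Complex.two_pi_I_ne_zero hsc
    refine ⟨-t, ?_⟩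
    have hC : (j : ℂ) / ℓ + ((m : ℂ) * (φ (α 0) : ℂ)) / σ
        = (∑ k : Fin m, (φ (α k) : ℂ)) / σ + ((-t : ℤ) : ℂ) := by
      rw [← Finset.add_sum_erase Finset.univ (fun k => (φ (α k) : ℂ))
        (Finset.mem_univ (0 : Fin m))]
      push_cast
      linear_combination -hq
    apply Rat.cast_injective (α := ℂ)
    push_cast
    convert hC using 2 <;> push_cast <;> ring
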